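/- arXiv:1307.7749 — 7 statements merged into one kernel-verified Lean document; each statement's English description precedes it below -/
import Mathlib

section
/- For a finite simple graph G, the multiplicity of 0 as an eigenvalue of the signless Laplacian Q(G) equals the number of bipartite connected components of G. -/
open Matrix SimpleGraph Finset

/-- The signless Laplacian matrix `Q(G) = D(G) + A(G)` of a simple graph. -/
def signlessLap {V : Type*} [Fintype V] [DecidableEq V] (G : SimpleGraph V)
    [DecidableRel G.Adj] : Matrix V V ℝ :=
  G.degMatrix ℝ + G.adjMatrix ℝ

section Aux

variable {V : Type*} [Fintype V] [DecidableEq V] (G : SimpleGraph V) [DecidableRel G.Adj]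

open scoped Classical

theorem signlessLap_isSymm : (signlessLap G).IsSymm :=
  (G.isSymm_degMatrix (R := ℝ)).add (isSymm_adjMatrix _)

theorem signlessLap_toLinearMap₂' (x : V → ℝ) :
    toLinearMap₂' ℝ (signlessLap G) x x =
    (∑ i : V, ∑ j : V, if G.Adj i j then (x i + x j)^2 else 0) / 2 := by
  simp_rw [toLinearMap₂'_apply', signlessLap, add_mulVec, dotProduct_add,
    G.dotProduct_mulVec_degMatrix, dotProduct_mulVec_adjMatrix, ← sum_add_distrib,
    degree_eq_sum_if_adj, sum_mul, ite_mul, one_mul, zero_mul, ← sum_add_distrib,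
    ite_add_ite, add_zero]
  rw [← add_self_div_two (∑ x_1 : V, ∑ x_2 : V, _)]
  conv_lhs => enter [1,2,2,i,2,j]; rw [if_congr (adj_comm G i j) rfl rfl]
  conv_lhs => enter [1,2]; rw [Finset.sum_comm]
  simp_rw [← sum_add_distrib, ite_add_ite]
  congr 2 with i
  congr 2 with j
  ring_nf

theorem posSemidef_signlessLap : PosSemidef (signlessLap G) := by
  rw [posSemidef_iff_dotProduct_mulVec]
  constructor
  · rw [IsHermitian, conjTranspose_eq_transpose_of_trivial, signlessLap_isSymm]
  · intro x
    rw [star_trivial, ← toLinearMap₂'_apply', signlessLap_toLinearMap₂']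
    positivity

theorem signlessLap_toLinearMap₂'_eq_zero_iff (x : V → ℝ) :
    toLinearMap₂' ℝ (signlessLap G) x x = 0 ↔ ∀ i j : V, G.Adj i j → x i = -x j := by
  rw [signlessLap_toLinearMap₂']
  rw [div_eq_zero_iff]
  have h2 : (2 : ℝ) ≠ 0 := two_ne_zero
  rw [or_iff_left h2]
  rw [sum_eq_zero_iff_of_nonneg (fun i _ => by positivity)]
  refine ⟨fun h i j hij => ?_, fun h i _ => ?_⟩
  · have := (sum_eq_zero_iff_of_nonneg (fun j _ => by positivity)).mp (h i (mem_univ i)) j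
      (mem_univ j)
    rw [if_pos hij] at this
    have := pow_eq_zero_iff (n := 2) (by norm_num) |>.mp this
    linarith
  · refine sum_eq_zero fun j _ => ?_
    split_ifs with hij
    · rw [h i j hij]; ring
    · rfl

theorem mem_ker_signlessLap_iff (x : V → ℝ) :
    x ∈ LinearMap.ker (Matrix.toLin' (signlessLap G)) ↔
      ∀ i j : V, G.Adj i j → x i = -x j := by
  rw [LinearMap.mem_ker, Matrix.toLin'_apply, ← (posSemidef_signlessLap G).toLinearMap₂'_zero_iff, star_trivial,
    signlessLap_toLinearMap₂'_eq_zero_iff]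

/-- A sign function on the support of a connected component: `±1` according to a chosen
2-coloring (normalized to be `1` at the chosen representative), and `0` outside;
`0` everywhere if the component is not 2-colorable. -/
noncomputable def sgnC (c : G.ConnectedComponent) (v : V) : ℝ :=
  if hv : v ∈ c.supp then
    if h : (G.induce c.supp).Colorable 2 then
      if h.some ⟨v, hv⟩ = h.some ⟨c.out, c.out_eq⟩ then 1 else -1
    else 0
  else 0

omit [Fintype V] [DecidableEq V] [DecidableRel G.Adj] in
lemma out_mem_supp (c : G.ConnectedComponent) : c.out ∈ c.supp := c.out_eq

lemma sgnC_out (c : G.ConnectedComponent) (h : (G.induce c.supp).Colorable 2) :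
    sgnC G c c.out = 1 := by
  rw [sgnC, dif_pos (out_mem_supp G c), dif_pos h, if_pos rfl]

lemma sgnC_adj (c : G.ConnectedComponent) {u v : V} (hu : u ∈ c.supp) (hv : v ∈ c.supp)
    (ha : G.Adj u v) : sgnC G c u = - sgnC G c v := by
  rw [sgnC, sgnC, dif_pos hu, dif_pos hv]
  by_cases h : (G.induce c.supp).Colorable 2
  · rw [dif_pos h, dif_pos h]
    have hne : h.some ⟨u, hu⟩ ≠ h.some ⟨v, hv⟩ := by
      apply Coloring.valid
      exact ha
    have key : ∀ a b o : Fin 2, a ≠ b →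
        ((if a = o then (1:ℝ) else -1) = -(if b = o then 1 else -1)) := by
      intro a b o hab
      fin_cases a <;> fin_cases b <;> fin_cases o <;> simp_all <;> norm_num
    exact key _ _ _ hne
  · rw [dif_neg h, dif_neg h]; norm_num

lemma sgnC_mul_self (c : G.ConnectedComponent) {v : V} (hv : v ∈ c.supp)
    (h : (G.induce c.supp).Colorable 2) : sgnC G c v * sgnC G c v = 1 := by
  rw [sgnC, dif_pos hv, dif_pos h]
  split_ifs <;> norm_num

lemma sgnC_mem_ker (c : G.ConnectedComponent) :
    sgnC G c ∈ LinearMap.ker (Matrix.toLin' (signlessLap G)) := by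
  rw [mem_ker_signlessLap_iff]
  intro i j hij
  by_cases hi : i ∈ c.supp
  · have hj : j ∈ c.supp := by
      rw [ConnectedComponent.mem_supp_iff] at hi ⊢
      rw [← hi]
      exact ConnectedComponent.sound hij.symm.reachable
    exact sgnC_adj G c hi hj hij
  · have hj : j ∉ c.supp := by
      intro hj
      apply hi
      rw [ConnectedComponent.mem_supp_iff] at hj ⊢
      rw [← hj]
      exact ConnectedComponent.sound hij.reachable
    rw [sgnC, sgnC, dif_neg hi, dif_neg hj]
    norm_num

lemma ker_walk_invariant {x : V → ℝ}
    (hx : x ∈ LinearMap.ker (Matrix.toLin' (signlessLap G))) (c : G.ConnectedComponent)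
    {u w : V} (p : G.Walk u w) (hu : u ∈ c.supp) :
    x u * sgnC G c u = x w * sgnC G c w := by
  induction p with
  | nil => rfl
  | @cons a b d ha p ih =>
    have hb : b ∈ c.supp := by
      rw [ConnectedComponent.mem_supp_iff] at hu ⊢
      rw [← hu]
      exact ConnectedComponent.sound ha.symm.reachable
    have h1 : x a = -x b := (mem_ker_signlessLap_iff G x).mp hx a b ha
    have h2 : sgnC G c a = - sgnC G c b := sgnC_adj G c hu hb ha
    rw [h1, h2, neg_mul_neg]
    exact ih hb

lemma ker_abs_invariant {x : V → ℝ}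
    (hx : x ∈ LinearMap.ker (Matrix.toLin' (signlessLap G)))
    {u w : V} (p : G.Walk u w) : |x u| = |x w| := by
  induction p with
  | nil => rfl
  | @cons a b d ha p ih =>
    have h1 : x a = -x b := (mem_ker_signlessLap_iff G x).mp hx a b ha
    rw [h1, abs_neg]
    exact ih

lemma ker_eq_zero_of_not_colorable {x : V → ℝ}
    (hx : x ∈ LinearMap.ker (Matrix.toLin' (signlessLap G))) {c : G.ConnectedComponent}
    (hc : ¬ (G.induce c.supp).Colorable 2) {v : V} (hv : v ∈ c.supp) : x v = 0 := by
  by_contra hxv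
  apply hc
  have habs : ∀ u : c.supp, |x u.1| = |x v| := by
    rintro ⟨u, hu⟩
    have : G.Reachable u v := by
      rw [ConnectedComponent.mem_supp_iff] at hu hv
      exact ConnectedComponent.exact (hu.trans hv.symm)
    obtain ⟨p⟩ := this
    exact ker_abs_invariant G hx p
  have hne : ∀ u : c.supp, x u.1 ≠ 0 := by
    intro u h0
    have := habs u
    rw [h0, abs_zero] at this
    exact hxv (abs_eq_zero.mp this.symm)
  refine ⟨⟨fun u => if 0 < x u.1 then 0 else 1, ?_⟩⟩
  rintro a b hab
  have hadj : G.Adj a.1 b.1 := hab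
  have h1 : x a.1 = -x b.1 := (mem_ker_signlessLap_iff G x).mp hx _ _ hadj
  have ha0 := hne a
  have hb0 := hne b
  simp only [top_adj]
  split_ifs with h2 h3 h3
  · exfalso; rw [h1] at h2; linarith [lt_of_le_of_ne (not_lt.mp (by linarith)) hb0]
  · exact fun h => absurd h (by norm_num)
  · exact fun h => absurd h (by norm_num)
  · exfalso
    have ha : x a.1 < 0 := lt_of_le_of_ne (not_lt.mp h2) ha0
    have hb : x b.1 < 0 := lt_of_le_of_ne (not_lt.mp h3) hb0
    rw [h1] at ha; linarith

lemma ker_eq_on_colorable {x : V → ℝ}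
    (hx : x ∈ LinearMap.ker (Matrix.toLin' (signlessLap G))) {c : G.ConnectedComponent}
    (hc : (G.induce c.supp).Colorable 2) {v : V} (hv : v ∈ c.supp) :
    x v = x c.out * sgnC G c v := by
  have hreach : G.Reachable c.out v := by
    rw [ConnectedComponent.mem_supp_iff] at hv
    exact ConnectedComponent.exact ((c.out_eq).trans hv.symm)
  obtain ⟨p⟩ := hreach
  have := ker_walk_invariant G hx c p (out_mem_supp G c)
  rw [sgnC_out G c hc, mul_one] at this
  rw [this, mul_assoc, sgnC_mul_self G c hv hc, mul_one]

/-- The kernel of the signless Laplacian is linearly equivalent to functions on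
the set of bipartite connected components. -/
noncomputable def kerSignlessLapEquiv :
    LinearMap.ker (Matrix.toLin' (signlessLap G)) ≃ₗ[ℝ]
      ({c : G.ConnectedComponent // (G.induce c.supp).Colorable 2} → ℝ) where
  toFun x := fun c => x.1 c.1.out
  map_add' x y := rfl
  map_smul' r x := rfl
  invFun f := ⟨fun v =>
      (if h : (G.induce (G.connectedComponentMk v).supp).Colorable 2 then
          f ⟨G.connectedComponentMk v, h⟩ else 0) *
        sgnC G (G.connectedComponentMk v) v, by
    rw [mem_ker_signlessLap_iff]
    intro i j hij
    have hcc : G.connectedComponentMk j = G.connectedComponentMk i :=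
      ConnectedComponent.sound hij.symm.reachable
    rw [hcc]
    have hi : i ∈ (G.connectedComponentMk i).supp := rfl
    have hj : j ∈ (G.connectedComponentMk i).supp := hcc
    rw [sgnC_adj G _ hi hj hij]
    ring⟩
  left_inv x := by
    apply Subtype.ext
    funext v
    show (if h : (G.induce (G.connectedComponentMk v).supp).Colorable 2 then
        x.1 (G.connectedComponentMk v).out else 0) *
      sgnC G (G.connectedComponentMk v) v = x.1 v
    by_cases h : (G.induce (G.connectedComponentMk v).supp).Colorable 2
    · rw [dif_pos h]
      exact (ker_eq_on_colorable G x.2 h rfl).symm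
    · rw [dif_neg h, zero_mul]
      exact (ker_eq_zero_of_not_colorable G x.2 h rfl).symm
  right_inv f := by
    funext c
    show (if h : (G.induce (G.connectedComponentMk c.1.out).supp).Colorable 2 then
        f ⟨G.connectedComponentMk c.1.out, h⟩ else 0) *
      sgnC G (G.connectedComponentMk c.1.out) c.1.out = f c
    have ho : G.connectedComponentMk c.1.out = c.1 := c.1.out_eq
    have key : ∀ (d : G.ConnectedComponent), d = c.1 →
        (if h : (G.induce d.supp).Colorable 2 then f ⟨d, h⟩ else 0) *
          sgnC G d c.1.out = f c := by
      rintro d rfl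
      rw [dif_pos c.2, sgnC_out G c.1 c.2, mul_one]
    exact key _ ho

end Aux

/-- The multiplicity of `0` as an eigenvalue of `Q(G)` (i.e. the dimension of the kernel
of `Q(G)`, since `Q(G)` is symmetric) equals the number of bipartite connected
components of `G`. -/
theorem stmt1 {V : Type*} [Fintype V] [DecidableEq V] (G : SimpleGraph V)
    [DecidableRel G.Adj] :
    Module.finrank ℝ (LinearMap.ker (Matrix.toLin' (signlessLap G))) =
      Nat.card {c : G.ConnectedComponent // (G.induce c.supp).Colorable 2} := by
  have := Fintype.ofFinite {c : G.ConnectedComponent // (G.induce c.supp).Colorable 2}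
  rw [(kerSignlessLapEquiv G).finrank_eq, Module.finrank_pi, Nat.card_eq_fintype_card]
end

section
/- If G is a graph with minimum degree δ(G) > 0, then the smallest eigenvalue μ(G) of the signless Laplacian Q(G) satisfies μ(G) < δ(G). -/
open Matrix SimpleGraph

/-- If `δ(G) > 0`, then the smallest signless Laplacian eigenvalue `μ(G)` satisfies
`μ(G) < δ(G)`. -/
theorem stmt5 {V : Type*} [Fintype V] [DecidableEq V] [Nonempty V] (G : SimpleGraph V)
    [DecidableRel G.Adj] (hδ : 0 < G.minDegree)
    (μ : ℝ)
    (hμ : ∃ x : V → ℝ, x ≠ 0 ∧ signlessLap G *ᵥ x = μ • x)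
    (hmin : ∀ (ν : ℝ) (x : V → ℝ), x ≠ 0 → signlessLap G *ᵥ x = ν • x → μ ≤ ν) :
    μ < G.minDegree := by
  classical
  set Q := signlessLap G with hQdef
  have hQherm : Q.IsHermitian := by
    have h1 : Q.IsSymm := by
      rw [hQdef, signlessLap, Matrix.IsSymm, Matrix.transpose_add]
      rw [SimpleGraph.isSymm_degMatrix (R := ℝ) (G := G), SimpleGraph.isSymm_adjMatrix (G := G)]
    rw [Matrix.IsHermitian, conjTranspose]
    rw [show Qᵀ = Q from h1]
    ext i j
    simp
  set M : Matrix V V ℝ := Q - μ • (1 : Matrix V V ℝ) with hMdef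
  have hMherm : M.IsHermitian := by
    refine hQherm.sub ?_
    rw [Matrix.IsHermitian, conjTranspose_smul, conjTranspose_one]
    simp
  -- all eigenvalues of M are nonnegative
  have heig : ∀ i, 0 ≤ hMherm.eigenvalues i := by
    intro i
    have hv := hMherm.mulVec_eigenvectorBasis i
    set x : V → ℝ := ⇑(hMherm.eigenvectorBasis i) with hxdef
    have hx0 : x ≠ 0 := by
      intro h
      have : hMherm.eigenvectorBasis i = 0 := by
        ext j
        exact congrFun h j
      exact hMherm.eigenvectorBasis.toBasis.ne_zero i (by simpa using this)
    have hMx : M *ᵥ x = hMherm.eigenvalues i • x := hv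
    have hQx : Q *ᵥ x = (hMherm.eigenvalues i + μ) • x := by
      have : M *ᵥ x = Q *ᵥ x - μ • x := by
        rw [hMdef, Matrix.sub_mulVec, Matrix.smul_mulVec, Matrix.one_mulVec]
      rw [this] at hMx
      rw [add_smul]
      linear_combination (norm := module) hMx
    have := hmin (hMherm.eigenvalues i + μ) x hx0 hQx
    linarith
  have hPSD : M.PosSemidef := hMherm.posSemidef_iff_eigenvalues_nonneg.mpr heig
  -- Rayleigh bound: μ * (y ⬝ᵥ y) ≤ y ⬝ᵥ (Q *ᵥ y) for all y
  have hray : ∀ y : V → ℝ, μ * (y ⬝ᵥ y) ≤ y ⬝ᵥ (Q *ᵥ y) := by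
    intro y
    have h : 0 ≤ y ⬝ᵥ (M *ᵥ y) := by simpa using hPSD.dotProduct_mulVec_nonneg y
    have hexp : y ⬝ᵥ (M *ᵥ y) = y ⬝ᵥ (Q *ᵥ y) - μ * (y ⬝ᵥ y) := by
      rw [hMdef, Matrix.sub_mulVec, dotProduct_sub, Matrix.smul_mulVec,
        Matrix.one_mulVec, dotProduct_smul, smul_eq_mul]
    linarith [hexp ▸ h]
  -- pick vertex of min degree and a neighbor
  obtain ⟨v, hv⟩ := G.exists_minimal_degree_vertex
  have hdegv : 0 < G.degree v := hv ▸ hδ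
  obtain ⟨u, hadj⟩ := (G.degree_pos_iff_exists_adj v).mp hdegv
  have hne : v ≠ u := G.ne_of_adj hadj
  set δ : ℝ := (G.minDegree : ℝ) with hδdef
  set d : ℝ := (G.degree u : ℝ) with hddef
  have hd0 : 0 ≤ d := Nat.cast_nonneg _
  have hδd : δ ≤ d := by rw [hδdef, hddef]; exact_mod_cast G.minDegree_le_degree u
  have hδ0 : 0 < δ := by rw [hδdef]; exact_mod_cast hδ
  set ε : ℝ := 1 / (d + 1) with hεdef
  have hε0 : 0 < ε := by positivity
  set y : V → ℝ := (Pi.single v 1 : V → ℝ) - ε • (Pi.single u 1 : V → ℝ) with hydef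
  -- matrix entries
  have hQvv : Q v v = δ := by
    simp [hQdef, signlessLap, degMatrix, Matrix.add_apply, Matrix.diagonal_apply_eq,
      adjMatrix_apply, hδdef, hv]
  have hQuu : Q u u = d := by
    simp [hQdef, signlessLap, degMatrix, Matrix.add_apply, Matrix.diagonal_apply_eq,
      adjMatrix_apply, hddef]
  have hQvu : Q v u = 1 := by
    simp [hQdef, signlessLap, degMatrix, Matrix.add_apply, Matrix.diagonal_apply_ne _ hne,
      adjMatrix_apply, hadj]
  have hQuv : Q u v = 1 := by
    simp [hQdef, signlessLap, degMatrix, Matrix.add_apply,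
      Matrix.diagonal_apply_ne _ hne.symm, adjMatrix_apply, hadj.symm]
  -- quadratic forms
  have hyy : y ⬝ᵥ y = 1 + ε ^ 2 := by
    rw [hydef]
    simp [dotProduct_sub, sub_dotProduct, dotProduct_smul, smul_dotProduct,
      single_dotProduct, dotProduct_single, Pi.single_apply, hne, hne.symm]
    ring
  have key : ∀ a b : V, (Pi.single a (1:ℝ) : V → ℝ) ⬝ᵥ (Q *ᵥ (Pi.single b 1 : V → ℝ)) = Q a b := by
    intro a b
    rw [Matrix.mulVec_single, single_dotProduct]
    simp
  have hyQy : y ⬝ᵥ (Q *ᵥ y) = δ - 2 * ε + ε ^ 2 * d := by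
    rw [hydef]
    simp only [Matrix.mulVec_sub, Matrix.mulVec_smul, dotProduct_sub, sub_dotProduct,
      dotProduct_smul, smul_dotProduct, key, smul_eq_mul, hQvv, hQuu, hQvu, hQuv]
    ring
  have hbound := hray y
  rw [hyy, hyQy] at hbound
  -- final arithmetic
  have hkey : ε * (d - δ) < 2 := by
    have h1 : ε * (d - δ) ≤ ε * d := by nlinarith
    have h2 : ε * d < 1 := by
      rw [hεdef]
      rw [div_mul_eq_mul_div, div_lt_one (by linarith)]
      linarith
    linarith
  have h3 : δ - 2 * ε + ε ^ 2 * d < δ * (1 + ε ^ 2) := by nlinarith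
  nlinarith [sq_nonneg ε]
end

section
/- Let H be a graph with an independent set S ⊆ V(H), let T = V(H) − S, and suppose the subgraph induced on T has e edges. Then μ(H) ≤ 4e/(|S| + |T|). -/
open Matrix SimpleGraph Finset

/-- If `S` is an independent set of `H`, `T = V(H) − S`, and the subgraph induced on `T`
has `e` edges, then `μ(H) ≤ 4e / (|S| + |T|)`. -/
theorem stmt8 {V : Type*} [Fintype V] [DecidableEq V] (H : SimpleGraph V)
    [DecidableRel H.Adj] (S : Finset V)
    (hind : ∀ u ∈ S, ∀ v ∈ S, ¬ H.Adj u v)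
    (e : ℕ)
    (he : e = (H.induce {v : V | v ∉ S}).edgeFinset.card)
    (μ : ℝ)
    (hμ : ∃ x : V → ℝ, x ≠ 0 ∧ signlessLap H *ᵥ x = μ • x)
    (hmin : ∀ (ν : ℝ) (x : V → ℝ), x ≠ 0 → signlessLap H *ᵥ x = ν • x → μ ≤ ν) :
    μ ≤ 4 * e / (S.card + Sᶜ.card) := by
  unfold signlessLap at hμ hmin
  set Q : Matrix V V ℝ := H.degMatrix ℝ + H.adjMatrix ℝ with hQdef
  -- V is nonempty
  obtain ⟨x0, hx0, -⟩ := hμ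
  have hne : Nonempty V := by
    by_contra h
    exact hx0 (funext fun v => absurd ⟨v⟩ h)
  -- Q is Hermitian
  have hQ : Q.IsHermitian := by
    have h1 : (H.degMatrix ℝ).IsSymm := H.isSymm_degMatrix ℝ
    have h2 : (H.adjMatrix ℝ).IsSymm := isSymm_adjMatrix H
    rw [Matrix.IsHermitian, conjTranspose_add, conjTranspose_eq_transpose_of_trivial,
      conjTranspose_eq_transpose_of_trivial, h1, h2]
  -- shifted matrix
  set M : Matrix V V ℝ := Q - μ • (1 : Matrix V V ℝ) with hMdef
  have hM : M.IsHermitian := by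
    rw [Matrix.IsHermitian, hMdef, conjTranspose_sub, hQ]
    congr 1
    rw [conjTranspose_smul, conjTranspose_one]
    simp
  have hQM : ∀ y : V → ℝ, Q *ᵥ y = M *ᵥ y + μ • y := by
    intro y
    rw [hMdef, sub_mulVec, smul_mulVec, one_mulVec]
    ring_nf
  -- eigenvalues of M are nonneg
  have heig : ∀ i, 0 ≤ hM.eigenvalues i := by
    intro i
    have hv := hM.mulVec_eigenvectorBasis i
    have hvne : ⇑(hM.eigenvectorBasis i) ≠ 0 := by
      intro h
      have := hM.eigenvectorBasis.toBasis.ne_zero i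
      rw [OrthonormalBasis.coe_toBasis] at this
      exact this (by ext v; exact congrFun h v)
    have : Q *ᵥ ⇑(hM.eigenvectorBasis i) = (hM.eigenvalues i + μ) • ⇑(hM.eigenvectorBasis i) := by
      rw [hQM, hv, add_smul]
    have := hmin _ _ hvne this
    linarith
  have hPSD : M.PosSemidef := hM.posSemidef_iff_eigenvalues_nonneg.mpr (fun i => heig i)
  -- test vector
  set x : V → ℝ := fun v => if v ∈ S then -1 else 1 with hxdef
  have hx2 : ∀ v, x v * x v = 1 := by
    intro v; by_cases h : v ∈ S <;> simp [hxdef, h]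
  have hxx : x ⬝ᵥ x = (Fintype.card V : ℝ) := by
    simp [dotProduct, hx2, Finset.card_univ]
  have hpsdx : 0 ≤ x ⬝ᵥ (M *ᵥ x) := by
    have := hPSD.dotProduct_mulVec_nonneg x
    simpa using this
  -- quadratic form value
  have hquad : x ⬝ᵥ (Q *ᵥ x) = ∑ u, ∑ v, (if u ∉ S ∧ v ∉ S ∧ H.Adj u v then (2:ℝ) else 0) := by
    rw [hQdef, add_mulVec, dotProduct_add]
    have hd : x ⬝ᵥ (H.degMatrix ℝ *ᵥ x) = ∑ u, ∑ v, (if H.Adj u v then (1:ℝ) else 0) := by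
      simp only [dotProduct]
      refine Finset.sum_congr rfl fun u _ => ?_
      rw [degMatrix_mulVec_apply, mul_comm ((H.degree u : ℝ)) (x u), ← mul_assoc, hx2, one_mul]
      rw [Finset.sum_boole, ← SimpleGraph.neighborFinset_eq_filter, SimpleGraph.degree]
    have ha : x ⬝ᵥ (H.adjMatrix ℝ *ᵥ x) = ∑ u, ∑ v, (if H.Adj u v then x u * x v else 0) := by
      simp only [dotProduct, mulVec, dotProduct, adjMatrix_apply, ite_mul, one_mul, zero_mul,
        mul_ite, mul_zero, Finset.mul_sum]
    rw [hd, ha, ← Finset.sum_add_distrib]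
    refine Finset.sum_congr rfl fun u _ => ?_
    rw [← Finset.sum_add_distrib]
    refine Finset.sum_congr rfl fun v _ => ?_
    by_cases hadj : H.Adj u v
    · by_cases hu : u ∈ S
      · by_cases hv : v ∈ S
        · exact absurd hadj (hind u hu v hv)
        · simp [hadj, hu, hv, hxdef]
      · by_cases hv : v ∈ S
        · simp [hadj, hu, hv, hxdef]
        · norm_num [hadj, hu, hv, hxdef]
    · simp [hadj]
  -- counting: ordered adjacent pairs in T equals twice the edge count
  have hcount : ∑ u, ∑ v, (if u ∉ S ∧ v ∉ S ∧ H.Adj u v then (1:ℝ) else 0) = 2 * e := by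
    have hsub : ∀ f : V → ℝ, (∑ u, if u ∉ S then f u else 0) = ∑ a : {v : V | v ∉ S}, f a := by
      intro f
      rw [← Finset.sum_filter]
      exact Finset.sum_subtype (p := fun v => v ∈ {v : V | v ∉ S}) _ (by simp) f
    calc ∑ u, ∑ v, (if u ∉ S ∧ v ∉ S ∧ H.Adj u v then (1:ℝ) else 0)
        = ∑ u, if u ∉ S then (∑ v, if v ∉ S ∧ H.Adj u v then (1:ℝ) else 0) else 0 := by
          refine Finset.sum_congr rfl fun u _ => ?_
          by_cases hu : u ∈ S
          · simp [hu]
          · simp [hu]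
      _ = ∑ a : {v : V | v ∉ S}, ∑ v, if v ∉ S ∧ H.Adj a v then (1:ℝ) else 0 := hsub _
      _ = ∑ a : {v : V | v ∉ S}, ∑ b : {v : V | v ∉ S},
            if (H.induce {v : V | v ∉ S}).Adj a b then (1:ℝ) else 0 := by
          refine Finset.sum_congr rfl fun a _ => ?_
          rw [show (∑ v, if v ∉ S ∧ H.Adj a v then (1:ℝ) else 0)
              = ∑ v, if v ∉ S then (if H.Adj a v then (1:ℝ) else 0) else 0 by
            refine Finset.sum_congr rfl fun v _ => ?_
            by_cases hv : v ∈ S <;> simp [hv]]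
          rw [hsub]
          refine Finset.sum_congr rfl fun b _ => ?_
          simp [SimpleGraph.induce]
      _ = 2 * e := by
          have h1 : ∀ a : {v : V | v ∉ S},
              (∑ b : {v : V | v ∉ S}, if (H.induce {v : V | v ∉ S}).Adj a b then (1:ℝ) else 0)
              = ((H.induce {v : V | v ∉ S}).degree a : ℝ) := by
            intro a
            rw [Finset.sum_boole, ← SimpleGraph.neighborFinset_eq_filter, SimpleGraph.degree]
          rw [Finset.sum_congr rfl fun a _ => h1 a, ← Nat.cast_sum,
            SimpleGraph.sum_degrees_eq_twice_card_edges, he]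
          push_cast
          ring
  have hquad4 : x ⬝ᵥ (Q *ᵥ x) = 4 * e := by
    rw [hquad]
    have : ∀ u v : V, (if u ∉ S ∧ v ∉ S ∧ H.Adj u v then (2:ℝ) else 0)
        = 2 * (if u ∉ S ∧ v ∉ S ∧ H.Adj u v then (1:ℝ) else 0) := by
      intro u v; split <;> ring
    simp_rw [this, ← Finset.mul_sum]
    rw [hcount]; ring
  have hn : (0:ℝ) < Fintype.card V := by
    exact_mod_cast Fintype.card_pos
  have hMx : x ⬝ᵥ (M *ᵥ x) = x ⬝ᵥ (Q *ᵥ x) - μ * (x ⬝ᵥ x) := by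
    rw [hMdef, sub_mulVec, dotProduct_sub, smul_mulVec, one_mulVec, dotProduct_smul,
      smul_eq_mul]
  have key : μ * (Fintype.card V : ℝ) ≤ 4 * e := by
    rw [hMx, hquad4, hxx] at hpsdx
    linarith
  have hcard : ((S.card : ℝ) + Sᶜ.card) = (Fintype.card V : ℝ) := by
    rw [← Nat.cast_add, Finset.card_add_card_compl]
  rw [hcard, le_div_iff₀ hn]
  exact key
end

section
/- Let A, B be Hermitian n × n matrices with eigenvalues in nondecreasing order. Then λ_k(A+B) ≤ λ_k(A) + λ_n(B) for each k, with equality if and only if there exists a nonzero common eigenvector x of A, B, and A+B with eigenvalues λ_k(A), λ_n(B), and λ_k(A+B) respectively. -/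
open Matrix

/-- The eigenvalues of a Hermitian matrix arranged in nondecreasing order. -/
noncomputable def sortedEigenvalues {n : ℕ} {A : Matrix (Fin n) (Fin n) ℂ}
    (hA : A.IsHermitian) : Fin n → ℝ :=
  hA.eigenvalues ∘ Tuple.sort hA.eigenvalues

namespace WeylSo

variable {n : ℕ} {M : Matrix (Fin n) (Fin n) ℂ}

local notation "⟪" x ", " y "⟫" => @inner ℂ _ _ x y

/-- The orthonormal eigenbasis of a Hermitian matrix, reordered so that the
corresponding eigenvalues are nondecreasing. -/
noncomputable def sb (hM : M.IsHermitian) :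
    OrthonormalBasis (Fin n) ℂ (EuclideanSpace ℂ (Fin n)) :=
  hM.eigenvectorBasis.reindex (Tuple.sort hM.eigenvalues).symm

lemma sb_apply (hM : M.IsHermitian) (i : Fin n) :
    sb hM i = hM.eigenvectorBasis (Tuple.sort hM.eigenvalues i) := by
  simp [sb]

lemma mulVec_sb (hM : M.IsHermitian) (i : Fin n) :
    M *ᵥ (sb hM i : EuclideanSpace ℂ (Fin n))
      = ((sortedEigenvalues hM i : ℂ)) • (sb hM i : EuclideanSpace ℂ (Fin n)) := by
  rw [sb_apply]
  have h := hM.mulVec_eigenvectorBasis (Tuple.sort hM.eigenvalues i)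
  refine h.trans ?_
  ext j
  simp [sortedEigenvalues, Complex.real_smul]

lemma sorted_monotone (hM : M.IsHermitian) : Monotone (sortedEigenvalues hM) :=
  Tuple.monotone_sort hM.eigenvalues

lemma conj_mul_self (c : ℂ) : (starRingEnd ℂ) c * c = ((‖c‖ ^ 2 : ℝ) : ℂ) := by
  rw [mul_comm, Complex.mul_conj]
  norm_cast
  simp [Complex.normSq_eq_norm_sq]

lemma mulVec_eq_sum (hM : M.IsHermitian) (x : EuclideanSpace ℂ (Fin n)) :
    M *ᵥ x = ∑ i, ((⟪sb hM i, x⟫ * (sortedEigenvalues hM i : ℂ)) •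
      (sb hM i : EuclideanSpace ℂ (Fin n))) := by
  conv_lhs => rw [← (sb hM).sum_repr' x]
  have h1 : M *ᵥ (∑ i, ⟪sb hM i, x⟫ • (sb hM i : EuclideanSpace ℂ (Fin n)))
      = ∑ i, ⟪sb hM i, x⟫ • (M *ᵥ (sb hM i : EuclideanSpace ℂ (Fin n))) := by
    rw [← M.mulVecLin_apply, map_sum]
    simp [Matrix.mulVecLin_apply]
  simp only [WithLp.ofLp_sum, WithLp.ofLp_smul]
  rw [h1]
  refine Finset.sum_congr rfl fun i _ => ?_
  rw [mulVec_sb, smul_smul]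

lemma inner_mulVec (hM : M.IsHermitian) (x : EuclideanSpace ℂ (Fin n)) :
    ⟪x, (WithLp.toLp 2 (M *ᵥ x) : EuclideanSpace ℂ (Fin n))⟫
      = ((∑ i, sortedEigenvalues hM i * ‖⟪sb hM i, x⟫‖ ^ 2 : ℝ) : ℂ) := by
  have h := mulVec_eq_sum hM x
  rw [show (WithLp.toLp 2 (M *ᵥ x) : EuclideanSpace ℂ (Fin n)) = ∑ i, ((⟪sb hM i, x⟫ *
    (sortedEigenvalues hM i : ℂ)) • (sb hM i : EuclideanSpace ℂ (Fin n))) by rw [h]]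
  rw [inner_sum]
  push_cast
  refine Finset.sum_congr rfl fun i _ => ?_
  rw [inner_smul_right, ← inner_conj_symm x (sb hM i)]
  calc ⟪sb hM i, x⟫ * (sortedEigenvalues hM i : ℂ) * (starRingEnd ℂ) ⟪sb hM i, x⟫
      = (sortedEigenvalues hM i : ℂ) *
        ((starRingEnd ℂ) ⟪sb hM i, x⟫ * ⟪sb hM i, x⟫) := by ring
    _ = (sortedEigenvalues hM i : ℂ) * ((‖⟪sb hM i, x⟫‖ ^ 2 : ℝ) : ℂ) := by
        rw [conj_mul_self]
    _ = _ := by push_cast; ring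

lemma norm_sq_eq (hM : M.IsHermitian) (x : EuclideanSpace ℂ (Fin n)) :
    ‖x‖ ^ 2 = ∑ i, ‖⟪sb hM i, x⟫‖ ^ 2 := by
  have h1 := (sb hM).sum_inner_mul_inner x x
  have h2 : ⟪x, x⟫ = ((‖x‖ ^ 2 : ℝ) : ℂ) := by
    rw [inner_self_eq_norm_sq_to_K]; norm_cast
  have h3 : ((‖x‖ ^ 2 : ℝ) : ℂ) = ((∑ i, ‖⟪sb hM i, x⟫‖ ^ 2 : ℝ) : ℂ) := by
    rw [← h2, ← h1]
    push_cast
    refine Finset.sum_congr rfl fun i _ => ?_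
    rw [← inner_conj_symm x (sb hM i), conj_mul_self]
    push_cast
    ring
  exact_mod_cast h3

lemma sum_le (hM : M.IsHermitian) (x : EuclideanSpace ℂ (Fin n)) (k : Fin n)
    (h : ∀ i, k < i → ⟪sb hM i, x⟫ = 0) :
    ∑ i, sortedEigenvalues hM i * ‖⟪sb hM i, x⟫‖ ^ 2
      ≤ sortedEigenvalues hM k * ‖x‖ ^ 2 := by
  rw [norm_sq_eq hM x, Finset.mul_sum]
  refine Finset.sum_le_sum fun i _ => ?_
  by_cases hik : k < i
  · simp [h i hik]
  · push_neg at hik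
    exact mul_le_mul_of_nonneg_right (sorted_monotone hM hik) (sq_nonneg _)

lemma sum_ge (hM : M.IsHermitian) (x : EuclideanSpace ℂ (Fin n)) (k : Fin n)
    (h : ∀ i, i < k → ⟪sb hM i, x⟫ = 0) :
    sortedEigenvalues hM k * ‖x‖ ^ 2
      ≤ ∑ i, sortedEigenvalues hM i * ‖⟪sb hM i, x⟫‖ ^ 2 := by
  rw [norm_sq_eq hM x, Finset.mul_sum]
  refine Finset.sum_le_sum fun i _ => ?_
  by_cases hik : i < k
  · simp [h i hik]
  · push_neg at hik
    exact mul_le_mul_of_nonneg_right (sorted_monotone hM hik) (sq_nonneg _)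

lemma eigvec_of_eq (hM : M.IsHermitian) (x : EuclideanSpace ℂ (Fin n)) (k : Fin n)
    (hc : ∀ i, k < i → ⟪sb hM i, x⟫ = 0)
    (heq : ∑ i, sortedEigenvalues hM i * ‖⟪sb hM i, x⟫‖ ^ 2
      = sortedEigenvalues hM k * ‖x‖ ^ 2) :
    M *ᵥ x = ((sortedEigenvalues hM k : ℂ)) • x := by
  have hsum : ∑ i, (sortedEigenvalues hM k - sortedEigenvalues hM i)
      * ‖⟪sb hM i, x⟫‖ ^ 2 = 0 := by
    have : ∑ i, (sortedEigenvalues hM k - sortedEigenvalues hM i) * ‖⟪sb hM i, x⟫‖ ^ 2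
        = sortedEigenvalues hM k * (∑ i, ‖⟪sb hM i, x⟫‖ ^ 2)
          - ∑ i, sortedEigenvalues hM i * ‖⟪sb hM i, x⟫‖ ^ 2 := by
      rw [Finset.mul_sum, ← Finset.sum_sub_distrib]
      exact Finset.sum_congr rfl fun i _ => by ring
    rw [this, ← norm_sq_eq hM x, heq, sub_self]
  have hnonneg : ∀ i ∈ Finset.univ, (0 : ℝ) ≤
      (sortedEigenvalues hM k - sortedEigenvalues hM i) * ‖⟪sb hM i, x⟫‖ ^ 2 := by
    intro i _
    by_cases hik : k < i
    · simp [hc i hik]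
    · push_neg at hik
      exact mul_nonneg (sub_nonneg.mpr (sorted_monotone hM hik)) (sq_nonneg _)
  have hzero := (Finset.sum_eq_zero_iff_of_nonneg hnonneg).mp hsum
  have h0 : ∀ i, sortedEigenvalues hM i ≠ sortedEigenvalues hM k → ⟪sb hM i, x⟫ = 0 := by
    intro i hne
    have := hzero i (Finset.mem_univ i)
    have h2 : ‖⟪sb hM i, x⟫‖ ^ 2 = 0 := by
      rcases mul_eq_zero.mp this with h | h
      · exact absurd (by linarith : sortedEigenvalues hM i = sortedEigenvalues hM k) hne
      · exact h
    have : ‖⟪sb hM i, x⟫‖ = 0 := by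
      have := sq_eq_zero_iff.mp h2
      exact this
    exact norm_eq_zero.mp this
  rw [mulVec_eq_sum hM x]
  have hterm : ∀ i, (⟪sb hM i, x⟫ * (sortedEigenvalues hM i : ℂ)) •
      (sb hM i : EuclideanSpace ℂ (Fin n))
      = ((sortedEigenvalues hM k : ℂ)) • (⟪sb hM i, x⟫ •
        (sb hM i : EuclideanSpace ℂ (Fin n))) := by
    intro i
    rcases eq_or_ne (sortedEigenvalues hM i) (sortedEigenvalues hM k) with h | h
    · rw [h, smul_smul, mul_comm]
    · rw [h0 i h]
      simp
  rw [← WithLp.ofLp_smul]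
  congr 1
  calc ∑ i, ((⟪sb hM i, x⟫ * (sortedEigenvalues hM i : ℂ)) •
        (sb hM i : EuclideanSpace ℂ (Fin n)))
      = ∑ i, ((sortedEigenvalues hM k : ℂ)) • (⟪sb hM i, x⟫ •
        (sb hM i : EuclideanSpace ℂ (Fin n))) :=
        Finset.sum_congr rfl fun i _ => hterm i
    _ = ((sortedEigenvalues hM k : ℂ)) • (∑ i, ⟪sb hM i, x⟫ •
        (sb hM i : EuclideanSpace ℂ (Fin n))) := by rw [Finset.smul_sum]
    _ = ((sortedEigenvalues hM k : ℂ)) • x := by rw [(sb hM).sum_repr' x]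

lemma exists_constrained (u v : Fin n → EuclideanSpace ℂ (Fin n)) (k : Fin n) :
    ∃ x : EuclideanSpace ℂ (Fin n), x ≠ 0 ∧ (∀ i, k < i → ⟪u i, x⟫ = 0)
      ∧ (∀ i, i < k → ⟪v i, x⟫ = 0) := by
  classical
  set J := (Set.Ioi k) ⊕ (Set.Iio k) with hJ
  have hcard : Fintype.card J < n := by
    rw [Fintype.card_sum, Fintype.card_ofFinset (Finset.Ioi k) (by simp),
      Fintype.card_ofFinset (Finset.Iio k) (by simp), Fin.card_Ioi, Fin.card_Iio]
    have := k.isLt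
    omega
  let w : J → EuclideanSpace ℂ (Fin n) := Sum.elim (fun i => u i.1) (fun i => v i.1)
  let L : EuclideanSpace ℂ (Fin n) →ₗ[ℂ] (J → ℂ) :=
    LinearMap.pi fun j => innerₛₗ ℂ (w j)
  have hker : LinearMap.ker L ≠ ⊥ := by
    intro hbot
    have hinj : Function.Injective L := LinearMap.ker_eq_bot.mp hbot
    have h1 : Module.finrank ℂ (EuclideanSpace ℂ (Fin n))
        ≤ Module.finrank ℂ (J → ℂ) :=
      LinearMap.finrank_le_finrank_of_injective hinj
    rw [finrank_euclideanSpace_fin, Module.finrank_pi] at h1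
    omega
  obtain ⟨x, hx, hx0⟩ := (Submodule.ne_bot_iff _).mp hker
  refine ⟨x, hx0, ?_, ?_⟩
  · intro i hi
    have := congrFun (LinearMap.mem_ker.mp hx) (Sum.inl ⟨i, hi⟩)
    simpa [L, w] using this
  · intro i hi
    have := congrFun (LinearMap.mem_ker.mp hx) (Sum.inr ⟨i, hi⟩)
    simpa [L, w] using this

end WeylSo

open WeylSo

/-- Weyl's inequality `λ_k(A+B) ≤ λ_k(A) + λ_n(B)` for Hermitian `A`, `B`, together with
So's equality condition: equality holds iff there is a nonzero common eigenvector of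
`A`, `B` and `A + B` with eigenvalues `λ_k(A)`, `λ_n(B)` and `λ_k(A+B)` respectively. -/
theorem stmt9 {n : ℕ} (hn : 0 < n) (A B : Matrix (Fin n) (Fin n) ℂ)
    (hA : A.IsHermitian) (hB : B.IsHermitian) (hAB : (A + B).IsHermitian)
    (k : Fin n) :
    sortedEigenvalues hAB k ≤ sortedEigenvalues hA k + sortedEigenvalues hB ⟨n - 1, by omega⟩ ∧
    (sortedEigenvalues hAB k = sortedEigenvalues hA k + sortedEigenvalues hB ⟨n - 1, by omega⟩ ↔
      ∃ x : Fin n → ℂ, x ≠ 0 ∧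
        A *ᵥ x = (sortedEigenvalues hA k : ℂ) • x ∧
        B *ᵥ x = (sortedEigenvalues hB ⟨n - 1, by omega⟩ : ℂ) • x ∧
        (A + B) *ᵥ x = (sortedEigenvalues hAB k : ℂ) • x) := by
  set m : Fin n := ⟨n - 1, by omega⟩ with hm
  set lA := sortedEigenvalues hA k with hlA
  set mu := sortedEigenvalues hB m with hmu
  set nu := sortedEigenvalues hAB k with hnu
  -- the vacuous constraint for the top index
  have htop : ∀ (x : EuclideanSpace ℂ (Fin n)) (i : Fin n), m < i →
      @inner ℂ _ _ (sb hB i) x = 0 := by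
    intro x i hi
    have h1 : (n : ℕ) - 1 < (i : ℕ) := hi
    have := i.isLt
    omega
  -- the common vector
  obtain ⟨x, hx0, hcA, hcAB⟩ := exists_constrained (fun i => sb hA i) (fun i => sb hAB i) k
  have hxnorm : (0 : ℝ) < ‖x‖ ^ 2 := by
    have : ‖x‖ ≠ 0 := norm_ne_zero_iff.mpr hx0
    positivity
  -- Rayleigh quotient sums
  set SA := ∑ i, sortedEigenvalues hA i * ‖@inner ℂ _ _ (sb hA i) x‖ ^ 2 with hSA
  set SB := ∑ i, sortedEigenvalues hB i * ‖@inner ℂ _ _ (sb hB i) x‖ ^ 2 with hSB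
  set SAB := ∑ i, sortedEigenvalues hAB i * ‖@inner ℂ _ _ (sb hAB i) x‖ ^ 2 with hSAB
  have hsplit : SAB = SA + SB := by
    have e1 := inner_mulVec hA x
    have e2 := inner_mulVec hB x
    have e3 := inner_mulVec hAB x
    have hadd : (WithLp.toLp 2 ((A + B) *ᵥ x) : EuclideanSpace ℂ (Fin n))
        = ((WithLp.toLp 2 (A *ᵥ x) : EuclideanSpace ℂ (Fin n)) + (WithLp.toLp 2 (B *ᵥ x) : EuclideanSpace ℂ (Fin n))) := by
      rw [Matrix.add_mulVec]; rfl
    have : @inner ℂ _ _ x ((WithLp.toLp 2 ((A + B) *ᵥ x) : EuclideanSpace ℂ (Fin n)))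
        = @inner ℂ _ _ x ((WithLp.toLp 2 (A *ᵥ x) : EuclideanSpace ℂ (Fin n)))
          + @inner ℂ _ _ x ((WithLp.toLp 2 (B *ᵥ x) : EuclideanSpace ℂ (Fin n))) := by
      rw [hadd, inner_add_right]
    rw [e1, e2, e3] at this
    exact_mod_cast this
  have hSAle : SA ≤ lA * ‖x‖ ^ 2 := sum_le hA x k hcA
  have hSBle : SB ≤ mu * ‖x‖ ^ 2 := sum_le hB x m (htop x)
  have hSABge : nu * ‖x‖ ^ 2 ≤ SAB := sum_ge hAB x k hcAB
  have hineq : nu ≤ lA + mu := by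
    have h1 : nu * ‖x‖ ^ 2 ≤ (lA + mu) * ‖x‖ ^ 2 := by
      calc nu * ‖x‖ ^ 2 ≤ SAB := hSABge
        _ = SA + SB := hsplit
        _ ≤ lA * ‖x‖ ^ 2 + mu * ‖x‖ ^ 2 := add_le_add hSAle hSBle
        _ = (lA + mu) * ‖x‖ ^ 2 := by ring
    exact le_of_mul_le_mul_right h1 hxnorm
  refine ⟨hineq, ?_, ?_⟩
  · -- equality → eigenvector
    intro heq
    have hSAeq : SA = lA * ‖x‖ ^ 2 := by nlinarith
    have hSBeq : SB = mu * ‖x‖ ^ 2 := by nlinarith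
    have hAx : A *ᵥ x = ((lA : ℂ)) • x := eigvec_of_eq hA x k hcA hSAeq
    have hBx : B *ᵥ x = ((mu : ℂ)) • x := eigvec_of_eq hB x m (htop x) hSBeq
    refine ⟨x, (WithLp.ofLp_eq_zero 2).ne.2 hx0, hAx, hBx, ?_⟩
    rw [Matrix.add_mulVec, hAx, hBx, ← add_smul]
    congr 1
    rw [heq]
    push_cast
    ring
  · -- eigenvector → equality
    rintro ⟨y, hy0, hAy, hBy, hABy⟩
    have h1 : ((lA : ℂ) + (mu : ℂ)) • y = ((nu : ℂ)) • y := by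
      rw [add_smul, ← hAy, ← hBy, ← Matrix.add_mulVec, hABy]
    have h2 : (((lA : ℂ) + (mu : ℂ)) - (nu : ℂ)) • y = 0 := by
      rw [sub_smul, h1, sub_self]
    rcases smul_eq_zero.mp h2 with h | h
    · have : ((lA + mu : ℝ) : ℂ) = ((nu : ℝ) : ℂ) := by
        push_cast
        linear_combination h
      have := Complex.ofReal_injective this
      linarith
    · exact absurd h hy0
end

section
/- Let G be a graph with smallest signless Laplacian eigenvalue μ, largest Laplacian eigenvalue λ, and minimum degree δ. Then μ ≥ 2δ − λ, with equality if and only if there is a nonzero vector x with Q(G)x = μx, L(G)x = λx, and D(G)x = δx simultaneously. -/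
open Matrix SimpleGraph

/-- Rayleigh-type bound: if every eigenvalue of a real symmetric matrix is at most `lam`,
then the quadratic form is bounded by `lam` times the squared norm. -/
private lemma rayleigh_le {V : Type*} [Fintype V] [DecidableEq V] (M : Matrix V V ℝ)
    (hM : M.IsHermitian) (lam : ℝ)
    (h : ∀ (ν : ℝ) (x : V → ℝ), x ≠ 0 → M *ᵥ x = ν • x → ν ≤ lam) (x : V → ℝ) :
    x ⬝ᵥ (M *ᵥ x) ≤ lam * (x ⬝ᵥ x) := by
  set N : Matrix V V ℝ := lam • (1 : Matrix V V ℝ) - M with hN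
  have hNh : N.IsHermitian := by
    simp only [hN, Matrix.IsHermitian, Matrix.conjTranspose_sub, Matrix.conjTranspose_smul,
      hM.eq, star_trivial, Matrix.conjTranspose_one]
  have hpsd : N.PosSemidef := by
    apply hNh.posSemidef_iff_eigenvalues_nonneg.mpr
    intro i
    have hv := hNh.mulVec_eigenvectorBasis i
    have hvne : (⇑(hNh.eigenvectorBasis i) : V → ℝ) ≠ 0 := by
      have h0 := hNh.eigenvectorBasis.orthonormal.ne_zero i
      intro hc
      apply h0
      ext j
      exact congrFun hc j
    have hMv : M *ᵥ ⇑(hNh.eigenvectorBasis i)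
        = (lam - hNh.eigenvalues i) • ⇑(hNh.eigenvectorBasis i) := by
      have hM' : M = lam • (1 : Matrix V V ℝ) - N := by simp [hN]
      rw [hM', sub_mulVec, smul_mulVec, one_mulVec, hv, sub_smul]
    have := h _ _ hvne hMv
    rw [Pi.zero_apply]
    linarith
  have h0 := hpsd.dotProduct_mulVec_nonneg x
  rw [star_trivial] at h0
  have hNx : N *ᵥ x = lam • x - M *ᵥ x := by
    rw [hN, sub_mulVec, smul_mulVec, one_mulVec]
  rw [hNx, dotProduct_sub, dotProduct_smul, smul_eq_mul] at h0
  linarith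

/-- If `μ` is the smallest signless Laplacian eigenvalue, `λ` the largest Laplacian
eigenvalue and `δ` the minimum degree of `G`, then `μ ≥ 2δ − λ`, with equality iff
there is a nonzero vector `x` with `Q(G)x = μx`, `L(G)x = λx` and `D(G)x = δx`. -/
theorem stmt10 {V : Type*} [Fintype V] [DecidableEq V] [Nonempty V] (G : SimpleGraph V)
    [DecidableRel G.Adj] (μ lam : ℝ)
    (hμ : ∃ x : V → ℝ, x ≠ 0 ∧ signlessLap G *ᵥ x = μ • x)
    (hμmin : ∀ (ν : ℝ) (x : V → ℝ), x ≠ 0 → signlessLap G *ᵥ x = ν • x → μ ≤ ν)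
    (hlam : ∃ x : V → ℝ, x ≠ 0 ∧ G.lapMatrix ℝ *ᵥ x = lam • x)
    (hlammax : ∀ (ν : ℝ) (x : V → ℝ), x ≠ 0 → G.lapMatrix ℝ *ᵥ x = ν • x → ν ≤ lam) :
    μ ≥ 2 * G.minDegree - lam ∧
      (μ = 2 * G.minDegree - lam ↔
        ∃ x : V → ℝ, x ≠ 0 ∧ signlessLap G *ᵥ x = μ • x ∧
          G.lapMatrix ℝ *ᵥ x = lam • x ∧
          G.degMatrix ℝ *ᵥ x = (G.minDegree : ℝ) • x) := by
  classical
  set δ : ℝ := (G.minDegree : ℝ) with hδ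
  have hQL : signlessLap G = (2 : ℝ) • G.degMatrix ℝ - G.lapMatrix ℝ := by
    rw [signlessLap, lapMatrix, two_smul]; abel
  have hLherm : (G.lapMatrix ℝ).IsHermitian := (posSemidef_lapMatrix ℝ G).1
  obtain ⟨x, hx0, hQx⟩ := hμ
  obtain ⟨i0, hi0⟩ : ∃ i, x i ≠ 0 := Function.ne_iff.mp hx0
  have hs : 0 < x ⬝ᵥ x := by
    rw [dotProduct]
    apply Finset.sum_pos' (fun i _ => mul_self_nonneg (x i))
    exact ⟨i0, Finset.mem_univ i0, mul_self_pos.mpr hi0⟩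
  have hD : δ * (x ⬝ᵥ x) ≤ x ⬝ᵥ (G.degMatrix ℝ *ᵥ x) := by
    rw [dotProduct_mulVec_degMatrix, dotProduct, Finset.mul_sum]
    apply Finset.sum_le_sum
    intro i _
    rw [mul_assoc]
    apply mul_le_mul_of_nonneg_right _ (mul_self_nonneg (x i))
    rw [hδ]
    exact_mod_cast G.minDegree_le_degree i
  have hL : x ⬝ᵥ (G.lapMatrix ℝ *ᵥ x) ≤ lam * (x ⬝ᵥ x) := rayleigh_le _ hLherm lam hlammax x
  have hQquad : x ⬝ᵥ (signlessLap G *ᵥ x) = μ * (x ⬝ᵥ x) := by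
    rw [hQx, dotProduct_smul, smul_eq_mul]
  have hsplit : x ⬝ᵥ (signlessLap G *ᵥ x)
      = 2 * (x ⬝ᵥ (G.degMatrix ℝ *ᵥ x)) - x ⬝ᵥ (G.lapMatrix ℝ *ᵥ x) := by
    rw [hQL, sub_mulVec, smul_mulVec, dotProduct_sub, dotProduct_smul, smul_eq_mul]
  have hineq : μ ≥ 2 * δ - lam := by nlinarith [hQquad, hsplit, hD, hL, hs]
  refine ⟨hineq, ?_, ?_⟩
  · -- equality implies common eigenvector
    intro heq
    have hdq : x ⬝ᵥ (G.degMatrix ℝ *ᵥ x) = δ * (x ⬝ᵥ x) := by nlinarith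
    have hsum : ∑ i : V, ((G.degree i : ℝ) - δ) * (x i * x i) = 0 := by
      have := hdq
      rw [dotProduct_mulVec_degMatrix, dotProduct, Finset.mul_sum] at this
      rw [Finset.sum_congr rfl (fun i _ => by ring : ∀ i ∈ Finset.univ,
        ((G.degree i : ℝ) - δ) * (x i * x i) = G.degree i * x i * x i - δ * (x i * x i)),
        Finset.sum_sub_distrib, this]
      ring
    have heach : ∀ i : V, ((G.degree i : ℝ) - δ) * (x i * x i) = 0 := by
      intro i
      have hnn : ∀ j ∈ Finset.univ, (0:ℝ) ≤ ((G.degree j : ℝ) - δ) * (x j * x j) := by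
        intro j _
        apply mul_nonneg _ (mul_self_nonneg _)
        have : δ ≤ (G.degree j : ℝ) := by rw [hδ]; exact_mod_cast G.minDegree_le_degree j
        linarith
      exact (Finset.sum_eq_zero_iff_of_nonneg hnn).mp hsum i (Finset.mem_univ i)
    have hDx : G.degMatrix ℝ *ᵥ x = δ • x := by
      ext i
      rw [degMatrix_mulVec_apply, Pi.smul_apply, smul_eq_mul]
      rcases mul_eq_zero.mp (heach i) with h | h
      · rw [show (G.degree i : ℝ) = δ by linarith]
      · rw [mul_self_eq_zero.mp h, mul_zero, mul_zero]
    have hLx : G.lapMatrix ℝ *ᵥ x = lam • x := by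
      have hLeq : G.lapMatrix ℝ = (2 : ℝ) • G.degMatrix ℝ - signlessLap G := by
        rw [hQL]; abel
      rw [hLeq, sub_mulVec, smul_mulVec, hDx, hQx]
      ext i
      simp only [Pi.sub_apply, Pi.smul_apply, smul_eq_mul]
      rw [heq]; ring
    exact ⟨x, hx0, hQx, hLx, hDx⟩
  · -- common eigenvector implies equality
    rintro ⟨y, hy0, hQy, hLy, hDy⟩
    obtain ⟨j, hj⟩ : ∃ j, y j ≠ 0 := Function.ne_iff.mp hy0
    have hkey : (μ + lam) • y = (2 * δ) • y := by
      have h1 : signlessLap G *ᵥ y + G.lapMatrix ℝ *ᵥ y = (2:ℝ) • (G.degMatrix ℝ *ᵥ y) := by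
        rw [← add_mulVec, ← smul_mulVec]
        congr 1
        rw [hQL, sub_add_cancel]
      rw [hQy, hLy, hDy, smul_smul] at h1
      rw [add_smul]
      exact h1
    have := congrFun hkey j
    simp only [Pi.smul_apply, smul_eq_mul] at this
    have : μ + lam = 2 * δ := mul_right_cancel₀ hj this
    linarith
end

section
/- With the setup above (H connected non-bipartite, S a maximal independent set, Q(H) = [[Q+D1, K],[K^T, D2]], μ = μ(H)), the smallest eigenvalue of the matrix Q_μ = Q + D1 + K(μI − D2)^{-1}K^T is exactly μ. -/
open Matrix SimpleGraph Finset

lemma slap_apply {V : Type*} [Fintype V] [DecidableEq V] (G : SimpleGraph V)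
    [DecidableRel G.Adj] (u v : V) :
    signlessLap G u v = (if u = v then (G.degree u : ℝ) else 0) +
      (if G.Adj u v then 1 else 0) := by
  simp [signlessLap, SimpleGraph.degMatrix, Matrix.diagonal, Matrix.add_apply]

lemma slap_herm {V : Type*} [Fintype V] [DecidableEq V] (G : SimpleGraph V)
    [DecidableRel G.Adj] : (signlessLap G).IsHermitian := by
  ext u v
  simp only [conjTranspose_apply, star_trivial, slap_apply, G.adj_comm u v, eq_comm]
  by_cases h : u = v
  · subst h; rfl
  · have h' : ¬ v = u := fun hvu => h hvu.symm
    simp [h, h']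

lemma psd_of_min {n : Type*} [Fintype n] [DecidableEq n] (M : Matrix n n ℝ)
    (hM : M.IsHermitian) (μ : ℝ)
    (hmin : ∀ (ν : ℝ) (x : n → ℝ), x ≠ 0 → M *ᵥ x = ν • x → μ ≤ ν) :
    (M - μ • 1).PosSemidef := by
  have hN : (M - μ • 1).IsHermitian := by
    unfold Matrix.IsHermitian
    rw [conjTranspose_sub, hM, conjTranspose_smul, conjTranspose_one, star_trivial]
  apply hN.posSemidef_iff_eigenvalues_nonneg.mpr
  intro i
  have hv := hN.mulVec_eigenvectorBasis i
  set v : n → ℝ := ⇑(hN.eigenvectorBasis i) with hvdef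
  have hvne : v ≠ 0 := fun h => hN.eigenvectorBasis.orthonormal.ne_zero i ((WithLp.ofLp_eq_zero 2).mp h)
  have hMv : M *ᵥ v = (hN.eigenvalues i + μ) • v := by
    have h1 : M *ᵥ v = (M - μ • 1) *ᵥ v + μ • v := by
      rw [Matrix.sub_mulVec, Matrix.smul_mulVec, Matrix.one_mulVec]
      abel
    rw [h1, hv, add_smul]
  have := hmin _ v hvne hMv
  show (0:ℝ) ≤ _
  linarith

/-- With `H` connected non-bipartite on vertex set `T ⊕ S` (`S` = the `inr`-side being a
maximal independent set) and `μ = μ(H)`, the matrix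
`Q_μ = Q + D₁ + K (μI − D₂)⁻¹ Kᵀ` — whose `(i,j)` entry is the `(i,j)` entry of the
`T`-block of `Q(H)` plus `Σ_{b ∈ S} K_{ib} K_{jb} / (μ − deg b)` — has smallest
eigenvalue exactly `μ`. -/
theorem stmt13 {α β : Type*} [Fintype α] [Fintype β] [DecidableEq α] [DecidableEq β]
    (H : SimpleGraph (α ⊕ β)) [DecidableRel H.Adj]
    (hconn : H.Connected) (hnbip : ¬ H.Colorable 2)
    (hind : ∀ a b : β, ¬ H.Adj (Sum.inr a) (Sum.inr b))
    (hmaxind : ∀ a : α, ∃ b : β, H.Adj (Sum.inr b) (Sum.inl a))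
    (μ : ℝ)
    (hμ : ∃ x : α ⊕ β → ℝ, x ≠ 0 ∧ signlessLap H *ᵥ x = μ • x)
    (hmin : ∀ (ν : ℝ) (x : α ⊕ β → ℝ), x ≠ 0 → signlessLap H *ᵥ x = ν • x → μ ≤ ν)
    (Qμ : Matrix α α ℝ)
    (hQμ : ∀ i j : α, Qμ i j = signlessLap H (Sum.inl i) (Sum.inl j) +
      ∑ b : β, (if H.Adj (Sum.inl i) (Sum.inr b) then (1 : ℝ) else 0) *
        (if H.Adj (Sum.inl j) (Sum.inr b) then (1 : ℝ) else 0) /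
          (μ - (H.degree (Sum.inr b) : ℝ))) :
    (∃ w : α → ℝ, w ≠ 0 ∧ Qμ *ᵥ w = μ • w) ∧
      (∀ (ν : ℝ) (w : α → ℝ), w ≠ 0 → Qμ *ᵥ w = ν • w → μ ≤ ν) := by
  -- abbreviations
  set K : α → β → ℝ := fun a b => if H.Adj (Sum.inl a) (Sum.inr b) then (1:ℝ) else 0
    with hKdef
  set d : β → ℝ := fun b => (H.degree (Sum.inr b) : ℝ) with hddef
  have hQμ' : ∀ i j, Qμ i j = signlessLap H (Sum.inl i) (Sum.inl j) +
      ∑ b, K i b * K j b / (μ - d b) := by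
    intro i j; rw [hQμ i j]
  -- entries of the signless Laplacian
  have hK1 : ∀ (a : α) (b : β), signlessLap H (Sum.inl a) (Sum.inr b) = K a b := by
    intro a b; rw [slap_apply]; simp [hKdef]
  have hK2 : ∀ (a : α) (b : β), signlessLap H (Sum.inr b) (Sum.inl a) = K a b := by
    intro a b; rw [slap_apply]; simp [hKdef, H.adj_comm]
  have hQ22 : ∀ b b' : β, signlessLap H (Sum.inr b) (Sum.inr b') =
      if b = b' then d b else 0 := by
    intro b b'; rw [slap_apply]
    by_cases h : b = b'
    · subst h
      simp [hind b b, hddef]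
    · simp [h, hind, fun hh : Sum.inr b = Sum.inr b' => h (Sum.inr.inj hh)]
  -- positive semidefiniteness of Q - μI
  have hpsd : (signlessLap H - μ • 1).PosSemidef := psd_of_min _ (slap_herm H) μ hmin
  -- every vertex has a neighbour
  have hedge : ∃ u v, H.Adj u v := by
    by_contra h
    push_neg at h
    exact hnbip ⟨SimpleGraph.Coloring.mk (fun _ => (0 : Fin 2))
      (fun {v w} hadj => absurd hadj (h v w))⟩
  have hnbr : ∀ v, ∃ u, H.Adj v u := by
    obtain ⟨u, w', huw⟩ := hedge
    intro v
    obtain ⟨p⟩ := hconn.preconnected v u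
    cases p with
    | nil => exact ⟨_, huw⟩
    | cons h' _ => exact ⟨_, h'⟩
  -- μ ≠ deg b for b on the independent side
  have hne : ∀ b : β, μ - d b ≠ 0 := by
    intro b hb
    set e : (α ⊕ β) → ℝ := Pi.single (Sum.inr b) (1:ℝ) with hedef
    have hmve : (signlessLap H - μ • 1) *ᵥ e =
        fun u => (signlessLap H - μ • 1) u (Sum.inr b) * 1 := Matrix.mulVec_single _ _ _
    have hquad : e ⬝ᵥ ((signlessLap H - μ • 1) *ᵥ e) = 0 := by
      rw [hmve, dotProduct]
      rw [Finset.sum_eq_single (Sum.inr b)]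
      · show e (Sum.inr b) * ((signlessLap H - μ • 1) (Sum.inr b) (Sum.inr b) * 1) = 0
        have h1 : e (Sum.inr b) = 1 := by simp [hedef]
        have h2 : (signlessLap H - μ • 1) (Sum.inr b) (Sum.inr b) = d b - μ := by
          rw [Matrix.sub_apply, slap_apply, Matrix.smul_apply, Matrix.one_apply_eq,
            smul_eq_mul, mul_one]
          simp [hddef]
        rw [h1, h2]
        linarith
      · intro u _ hu
        have : e u = 0 := by simp [hedef, Pi.single_apply, hu]
        rw [this, zero_mul]
      · intro h; exact absurd (Finset.mem_univ _) h
    have hz : (signlessLap H - μ • 1) *ᵥ e = 0 := by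
      have := (hpsd.dotProduct_mulVec_zero_iff e).mp (by simpa using hquad)
      exact this
    obtain ⟨u, hu⟩ := hnbr (Sum.inr b)
    have hub : u ≠ Sum.inr b := fun h => H.irrefl (h ▸ hu)
    have : ((signlessLap H - μ • 1) *ᵥ e) u = 1 := by
      rw [hmve]
      show (signlessLap H - μ • 1) u (Sum.inr b) * 1 = 1
      rw [mul_one, Matrix.sub_apply, slap_apply, Matrix.smul_apply, Matrix.one_apply_ne hub,
        smul_eq_mul, mul_zero]
      have hadj : H.Adj u (Sum.inr b) := H.adj_symm hu
      simp [hub, hadj]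
    rw [hz] at this
    simp at this
  constructor
  · obtain ⟨x, hx0, hxe⟩ := hμ
    have hxl : ∀ v, (signlessLap H *ᵥ x) v = μ * x v := by
      intro v; rw [hxe]; rfl
    have hx2 : ∀ b : β, (∑ a, K a b * x (Sum.inl a)) + d b * x (Sum.inr b)
        = μ * x (Sum.inr b) := by
      intro b
      have h := hxl (Sum.inr b)
      rw [Matrix.mulVec, dotProduct, Fintype.sum_sum_type] at h
      simp only [hK2, hQ22, ite_mul, zero_mul, Finset.sum_ite_eq, Finset.mem_univ,
        if_true] at h
      exact h
    have hz : ∀ b : β, x (Sum.inr b) = (∑ a, K a b * x (Sum.inl a)) / (μ - d b) := by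
      intro b
      rw [eq_div_iff (hne b)]
      linear_combination (-1 : ℝ) * hx2 b
    have hx1 : ∀ i : α, (∑ j, signlessLap H (Sum.inl i) (Sum.inl j) * x (Sum.inl j))
        + ∑ b, K i b * x (Sum.inr b) = μ * x (Sum.inl i) := by
      intro i
      have h := hxl (Sum.inl i)
      rw [Matrix.mulVec, dotProduct, Fintype.sum_sum_type] at h
      simp only [hK1] at h
      exact h
    refine ⟨fun a => x (Sum.inl a), ?_, ?_⟩
    · intro hw
      apply hx0
      funext v
      have hl : ∀ a : α, x (Sum.inl a) = 0 := fun a => congrFun hw a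
      cases v with
      | inl a => exact hl a
      | inr b =>
        rw [hz b]
        simp [hl]
    · funext i
      show (Qμ *ᵥ fun a => x (Sum.inl a)) i = (μ • fun a => x (Sum.inl a)) i
      simp only [Matrix.mulVec, dotProduct, Pi.smul_apply, smul_eq_mul]
      have step : ∀ j, Qμ i j * x (Sum.inl j)
          = signlessLap H (Sum.inl i) (Sum.inl j) * x (Sum.inl j)
            + ∑ b, (K i b / (μ - d b)) * (K j b * x (Sum.inl j)) := by
        intro j
        rw [hQμ' i j, add_mul, Finset.sum_mul]
        congr 1
        refine Finset.sum_congr rfl fun b _ => ?_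
        ring
      calc ∑ j, Qμ i j * x (Sum.inl j)
          = (∑ j, signlessLap H (Sum.inl i) (Sum.inl j) * x (Sum.inl j))
            + ∑ j, ∑ b, (K i b / (μ - d b)) * (K j b * x (Sum.inl j)) := by
            rw [← Finset.sum_add_distrib]
            exact Finset.sum_congr rfl fun j _ => step j
        _ = (∑ j, signlessLap H (Sum.inl i) (Sum.inl j) * x (Sum.inl j))
            + ∑ b, K i b * x (Sum.inr b) := by
            congr 1
            rw [Finset.sum_comm]
            refine Finset.sum_congr rfl fun b _ => ?_
            rw [← Finset.mul_sum, hz b]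
            ring
        _ = μ * x (Sum.inl i) := hx1 i
  · intro ν w hw0 hwe
    set S : β → ℝ := fun b => ∑ a, K a b * w a with hSdef
    set z : β → ℝ := fun b => S b / (μ - d b) with hzdef
    set x : (α ⊕ β) → ℝ := Sum.elim w z with hxdef
    set P : ℝ := ∑ a, w a * (∑ a', signlessLap H (Sum.inl a) (Sum.inl a') * w a')
      with hPdef
    have hS : ∀ b, (μ - d b) * z b = S b := by
      intro b
      rw [hzdef]
      field_simp
      rw [mul_comm, mul_div_assoc, div_self (hne b), mul_one]
    have hQl : ∀ a, (signlessLap H *ᵥ x) (Sum.inl a)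
        = (∑ a', signlessLap H (Sum.inl a) (Sum.inl a') * w a') + ∑ b, K a b * z b := by
      intro a
      simp only [Matrix.mulVec, dotProduct, Fintype.sum_sum_type, hxdef, Sum.elim_inl,
        Sum.elim_inr, hK1]
    have hQr : ∀ b, (signlessLap H *ᵥ x) (Sum.inr b) = S b + d b * z b := by
      intro b
      simp only [Matrix.mulVec, dotProduct, Fintype.sum_sum_type, hxdef, Sum.elim_inl,
        Sum.elim_inr, hK2, hQ22, ite_mul, zero_mul, Finset.sum_ite_eq, Finset.mem_univ,
        if_true, hSdef]
    have e2 : x ⬝ᵥ x = w ⬝ᵥ w + ∑ b, z b * z b := by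
      simp only [dotProduct, Fintype.sum_sum_type, hxdef, Sum.elim_inl, Sum.elim_inr]
    have e1 : x ⬝ᵥ (signlessLap H *ᵥ x)
        = P + (∑ b, z b * S b) + (∑ b, z b * (S b + d b * z b)) := by
      rw [dotProduct, Fintype.sum_sum_type]
      congr 1
      · calc ∑ a, x (Sum.inl a) * (signlessLap H *ᵥ x) (Sum.inl a)
            = ∑ a, (w a * (∑ a', signlessLap H (Sum.inl a) (Sum.inl a') * w a')
              + ∑ b, w a * (K a b * z b)) := by
              refine Finset.sum_congr rfl fun a _ => ?_
              have hxa : x (Sum.inl a) = w a := by rw [hxdef]; rfl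
              rw [hQl a, hxa, mul_add]
              congr 1
              rw [Finset.mul_sum]
          _ = P + ∑ a, ∑ b, w a * (K a b * z b) := by
              rw [Finset.sum_add_distrib, hPdef]
          _ = P + ∑ b, z b * S b := by
              congr 1
              rw [Finset.sum_comm]
              refine Finset.sum_congr rfl fun b _ => ?_
              rw [hSdef]
              simp only []
              rw [Finset.mul_sum]
              exact Finset.sum_congr rfl fun a _ => by ring
      · refine Finset.sum_congr rfl fun b _ => ?_
        rw [hQr b]
        have hxb : x (Sum.inr b) = z b := by rw [hxdef]; rfl
        rw [hxb]
    have hQμrow : ∀ i, (∑ j, Qμ i j * w j)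
        = (∑ j, signlessLap H (Sum.inl i) (Sum.inl j) * w j) + ∑ b, K i b * z b := by
      intro i
      calc ∑ j, Qμ i j * w j
          = (∑ j, signlessLap H (Sum.inl i) (Sum.inl j) * w j)
            + ∑ j, ∑ b, (K i b / (μ - d b)) * (K j b * w j) := by
            rw [← Finset.sum_add_distrib]
            refine Finset.sum_congr rfl fun j _ => ?_
            rw [hQμ' i j, add_mul, Finset.sum_mul]
            congr 1
            exact Finset.sum_congr rfl fun b _ => by ring
        _ = _ := by
            congr 1
            rw [Finset.sum_comm]
            refine Finset.sum_congr rfl fun b _ => ?_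
            rw [← Finset.mul_sum, hzdef]
            simp only []
            rw [hSdef]
            simp only []
            ring
    have e3 : w ⬝ᵥ (Qμ *ᵥ w) = P + ∑ b, z b * S b := by
      calc w ⬝ᵥ (Qμ *ᵥ w) = ∑ a, w a * ∑ j, Qμ a j * w j := by
            simp only [dotProduct, Matrix.mulVec]
        _ = ∑ a, w a * ((∑ j, signlessLap H (Sum.inl a) (Sum.inl j) * w j)
            + ∑ b, K a b * z b) :=
            Finset.sum_congr rfl fun a _ => by rw [hQμrow a]
        _ = P + ∑ a, ∑ b, w a * (K a b * z b) := by
            rw [hPdef, ← Finset.sum_add_distrib]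
            refine Finset.sum_congr rfl fun a _ => ?_
            simp only [mul_add, Finset.mul_sum]
        _ = P + ∑ b, z b * S b := by
            congr 1
            rw [Finset.sum_comm]
            refine Finset.sum_congr rfl fun b _ => ?_
            rw [hSdef]
            simp only []
            rw [Finset.mul_sum]
            exact Finset.sum_congr rfl fun a _ => by ring
    have hc : (∑ b, z b * (S b + d b * z b)) - μ * (∑ b, z b * z b) = 0 := by
      rw [Finset.mul_sum, ← Finset.sum_sub_distrib]
      refine Finset.sum_eq_zero fun b _ => ?_
      linear_combination (-(z b)) * hS b
    have hT : 0 ≤ x ⬝ᵥ ((signlessLap H - μ • 1) *ᵥ x) := by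
      have h := hpsd.dotProduct_mulVec_nonneg x
      simpa using h
    have hsplit : x ⬝ᵥ ((signlessLap H - μ • 1) *ᵥ x)
        = x ⬝ᵥ (signlessLap H *ᵥ x) - μ * (x ⬝ᵥ x) := by
      rw [Matrix.sub_mulVec, dotProduct_sub, Matrix.smul_mulVec, Matrix.one_mulVec,
        dotProduct_smul, smul_eq_mul]
    have hwq : w ⬝ᵥ (Qμ *ᵥ w) = ν * (w ⬝ᵥ w) := by
      rw [hwe, dotProduct_smul, smul_eq_mul]
    have hww : 0 < w ⬝ᵥ w := by
      have h0 : 0 ≤ w ⬝ᵥ w := by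
        rw [dotProduct]
        exact Finset.sum_nonneg fun i _ => mul_self_nonneg (w i)
      rcases lt_or_eq_of_le h0 with h | h
      · exact h
      · exact absurd (dotProduct_self_eq_zero.mp h.symm) hw0
    have hfin : 0 ≤ (ν - μ) * (w ⬝ᵥ w) := by
      have hkey : x ⬝ᵥ ((signlessLap H - μ • 1) *ᵥ x) = (ν - μ) * (w ⬝ᵥ w) := by
        rw [hsplit, e1, e2]
        have h4 : P + ∑ b, z b * S b = ν * (w ⬝ᵥ w) := by rw [← e3, hwq]
        linear_combination hc + h4
      rw [← hkey]
      exact hT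
    by_contra hlt
    push_neg at hlt
    nlinarith [mul_pos (sub_pos.mpr hlt) hww]
end

section
/- Let A be an n×n strictly diagonally dominant matrix with inverse Ã = (ã_{ij}). Then for all j ≠ i, |ã_{ji}| ≤ (max over l ≠ i of |a_{li}| / (|a_{ll}| − Σ_{k ≠ l, k ≠ i} |a_{lk}|)) · |ã_{ii}|. -/
open Matrix Finset

/-- Quantified inheritance of diagonal dominance by the inverse (Li–Huang–Shen–Li):
if `A` is strictly diagonally dominant with inverse `Ã`, then for all `j ≠ i`,
`|ã_{ji}| ≤ (max_{l ≠ i} |a_{li}| / (|a_{ll}| − Σ_{k ≠ l, i} |a_{lk}|)) · |ã_{ii}|`. -/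
theorem stmt18 {n : ℕ} (hn : 1 < n) (A : Matrix (Fin n) (Fin n) ℝ)
    (hdd : ∀ i : Fin n, ∑ j ∈ Finset.univ.erase i, |A i j| < |A i i|) :
    ∀ i j : Fin n, j ≠ i →
      |A⁻¹ j i| ≤
        (⨆ l : {l : Fin n // l ≠ i},
            |A l.1 i| /
              (|A l.1 l.1| - ∑ k ∈ (Finset.univ.erase l.1).erase i, |A l.1 k|)) *
          |A⁻¹ i i| := by
  have hdet : A.det ≠ 0 := det_ne_zero_of_sum_row_lt_diag
    (by simpa [Real.norm_eq_abs] using hdd)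
  have hAB : A * A⁻¹ = 1 := Matrix.mul_nonsing_inv A (isUnit_iff_ne_zero.mpr hdet)
  intro i j hj
  set B := A⁻¹ with hB
  set f : {l : Fin n // l ≠ i} → ℝ := fun l =>
    |A l.1 i| / (|A l.1 l.1| - ∑ k ∈ (Finset.univ.erase l.1).erase i, |A l.1 k|) with hf
  have hbdd : BddAbove (Set.range f) := Set.Finite.bddAbove (Set.finite_range f)
  -- choose maximizer j0 of |B · i| over erase i
  obtain ⟨j0, hj0mem, hj0max⟩ := Finset.exists_max_image (Finset.univ.erase i)
    (fun k => |B k i|) ⟨j, Finset.mem_erase.mpr ⟨hj, Finset.mem_univ j⟩⟩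
  have hj0 : j0 ≠ i := (Finset.mem_erase.mp hj0mem).1
  -- key inequality for j0
  have heq : ∑ k, A j0 k * B k i = 0 := by
    have := congrFun (congrFun hAB j0) i
    simpa [Matrix.mul_apply, Matrix.one_apply, hj0] using this
  have hsplit : A j0 j0 * B j0 i + (A j0 i * B i i +
      ∑ k ∈ (Finset.univ.erase j0).erase i, A j0 k * B k i) = 0 := by
    rw [← heq]
    rw [← Finset.add_sum_erase _ _ (Finset.mem_univ j0)]
    congr 1
    rw [← Finset.add_sum_erase _ _ (Finset.mem_erase.mpr ⟨hj0.symm ∘ Eq.symm ∘ Eq.symm, Finset.mem_univ i⟩)]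
  have habs : |A j0 j0| * |B j0 i| ≤ |A j0 i| * |B i i| +
      (∑ k ∈ (Finset.univ.erase j0).erase i, |A j0 k|) * |B j0 i| := by
    have h1 : A j0 j0 * B j0 i = -(A j0 i * B i i +
        ∑ k ∈ (Finset.univ.erase j0).erase i, A j0 k * B k i) := by linarith
    calc |A j0 j0| * |B j0 i| = |A j0 j0 * B j0 i| := (abs_mul _ _).symm
      _ = |A j0 i * B i i + ∑ k ∈ (Finset.univ.erase j0).erase i, A j0 k * B k i| := by
          rw [h1, abs_neg]
      _ ≤ |A j0 i * B i i| + |∑ k ∈ (Finset.univ.erase j0).erase i, A j0 k * B k i| :=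
          abs_add_le _ _
      _ ≤ |A j0 i| * |B i i| + ∑ k ∈ (Finset.univ.erase j0).erase i, |A j0 k * B k i| := by
          rw [abs_mul]
          exact add_le_add_right (Finset.abs_sum_le_sum_abs _ _) _
      _ ≤ |A j0 i| * |B i i| + ∑ k ∈ (Finset.univ.erase j0).erase i, |A j0 k| * |B j0 i| := by
          refine add_le_add_right (Finset.sum_le_sum fun k hk => ?_) _
          rw [abs_mul]
          refine mul_le_mul_of_nonneg_left ?_ (abs_nonneg _)
          exact hj0max k (Finset.mem_erase.mpr ⟨(Finset.mem_erase.mp hk).1,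
            Finset.mem_univ k⟩)
      _ = |A j0 i| * |B i i| + (∑ k ∈ (Finset.univ.erase j0).erase i, |A j0 k|) * |B j0 i| := by
          rw [Finset.sum_mul]
  set D : ℝ := |A j0 j0| - ∑ k ∈ (Finset.univ.erase j0).erase i, |A j0 k| with hD
  have hDpos : 0 < D := by
    have h1 : ∑ k ∈ (Finset.univ.erase j0).erase i, |A j0 k| ≤
        ∑ k ∈ Finset.univ.erase j0, |A j0 k| :=
      Finset.sum_le_sum_of_subset_of_nonneg (Finset.erase_subset _ _)
        (fun k _ _ => abs_nonneg _)
    have := hdd j0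
    simp only [hD]
    linarith
  have hkey : |B j0 i| ≤ f ⟨j0, hj0⟩ * |B i i| := by
    rw [hf]
    rw [div_mul_eq_mul_div, le_div_iff₀ hDpos]
    simp only [hD]
    nlinarith [abs_nonneg (B j0 i)]
  have hle_sup : f ⟨j0, hj0⟩ ≤ ⨆ l : {l : Fin n // l ≠ i}, f l := le_ciSup hbdd _
  calc |B j i| ≤ |B j0 i| := hj0max j (Finset.mem_erase.mpr ⟨hj, Finset.mem_univ j⟩)
    _ ≤ f ⟨j0, hj0⟩ * |B i i| := hkey
    _ ≤ (⨆ l : {l : Fin n // l ≠ i}, f l) * |B i i| :=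
        mul_le_mul_of_nonneg_right hle_sup (abs_nonneg _)
end
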